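/- arXiv:2210.06234 — 3 statements merged into one kernel-verified Lean document; each statement's English description precedes it below -/
import Mathlib

section
/- Let k be a field, and let α, β ∈ k[x,y] be linearly independent homogeneous linear forms. Then the k[x,y]-module M = {(f,g) ∈ k[x,y]² : α ∣ f−g and β ∣ f−g} is free of rank 2 with basis {(1,1), (αβ, 0)}. (This computes the equivariant cohomology of the standard T²-GKM action on S⁴.) -/
open MvPolynomial

section GKMAux

lemma gkm_degree_one_cases (d : Fin 2 →₀ ℕ) (hd : d.degree = 1) :
    d = Finsupp.single 0 1 ∨ d = Finsupp.single 1 1 := by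
  have hsum : d 0 + d 1 = 1 := by
    have : d.degree = ∑ i : Fin 2, d i := by
      rw [Finsupp.degree]
      exact Finset.sum_subset (Finset.subset_univ _)
        (fun x _ hx => Finsupp.notMem_support_iff.mp hx)
    rw [this] at hd
    simpa [Fin.sum_univ_two] using hd
  rcases Nat.eq_zero_or_pos (d 0) with h0 | h0
  · right
    ext i
    fin_cases i <;> simp [Finsupp.single_apply] <;> omega
  · left
    ext i
    fin_cases i <;> simp [Finsupp.single_apply] <;> omega

lemma gkm_homog1_eq {k : Type*} [Field k] (α : MvPolynomial (Fin 2) k)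
    (hα : α.IsHomogeneous 1) :
    α = C (coeff (Finsupp.single 0 1) α) * X 0 + C (coeff (Finsupp.single 1 1) α) * X 1 := by
  ext d
  rw [coeff_add, coeff_C_mul, coeff_C_mul, coeff_X', coeff_X']
  by_cases h0 : (Finsupp.single 0 1 : Fin 2 →₀ ℕ) = d
  · subst h0
    have : (Finsupp.single 1 1 : Fin 2 →₀ ℕ) ≠ Finsupp.single 0 1 := by
      intro h; exact absurd (DFunLike.congr_fun h 0) (by simp)
    simp [this]
  · by_cases h1 : (Finsupp.single 1 1 : Fin 2 →₀ ℕ) = d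
    · subst h1; simp [h0]
    · have hd : d.degree ≠ 1 := by
        intro h
        rcases gkm_degree_one_cases d h with h | h <;> simp [h] at h0 h1
      simp [h0, h1, hα.coeff_eq_zero hd]

lemma gkm_prime_X0 {k : Type*} [Field k] : Prime (X 0 : MvPolynomial (Fin 2) k) := by
  have h : Prime ((MvPolynomial.finSuccEquiv k 1) (X 0)) := by
    rw [MvPolynomial.finSuccEquiv_X_zero]; exact Polynomial.prime_X
  exact (MulEquiv.prime_iff (MvPolynomial.finSuccEquiv k 1).toMulEquiv).mp h

lemma gkm_prime_lin_left {k : Type*} [Field k] (a b : k) (ha : a ≠ 0) :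
    Prime (C a * X 0 + C b * X 1 : MvPolynomial (Fin 2) k) := by
  let τ : MvPolynomial (Fin 2) k →ₐ[k] MvPolynomial (Fin 2) k :=
    aeval ![C a * X 0 + C b * X 1, X 1]
  let τ' : MvPolynomial (Fin 2) k →ₐ[k] MvPolynomial (Fin 2) k :=
    aeval ![C a⁻¹ * (X 0 - C b * X 1), X 1]
  have hτ0 : τ (X 0) = C a * X 0 + C b * X 1 := by simp [τ]
  have hτ1 : τ (X 1) = X 1 := by simp [τ]
  have hτ'0 : τ' (X 0) = C a⁻¹ * (X 0 - C b * X 1) := by simp [τ']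
  have hτ'1 : τ' (X 1) = X 1 := by simp [τ']
  have h1 : τ.comp τ' = AlgHom.id k _ := by
    apply MvPolynomial.algHom_ext
    intro i
    fin_cases i
    · show τ (τ' (X 0)) = X 0
      rw [hτ'0, map_mul, map_sub, map_mul, hτ0, hτ1]
      rw [show τ (C a⁻¹) = C a⁻¹ from aeval_C _ _, show τ (C b) = C b from aeval_C _ _]
      rw [add_sub_cancel_right, ← mul_assoc, ← C_mul, inv_mul_cancel₀ ha, C_1, one_mul]
    · show τ (τ' (X 1)) = X 1
      rw [hτ'1, hτ1]
  have h2 : τ'.comp τ = AlgHom.id k _ := by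
    apply MvPolynomial.algHom_ext
    intro i
    fin_cases i
    · show τ' (τ (X 0)) = X 0
      rw [hτ0, map_add, map_mul, map_mul, hτ'0, hτ'1]
      rw [show τ' (C a) = C a from aeval_C _ _, show τ' (C b) = C b from aeval_C _ _]
      rw [← mul_assoc, ← C_mul, mul_inv_cancel₀ ha, C_1, one_mul, sub_add_cancel]
    · show τ' (τ (X 1)) = X 1
      rw [hτ1, hτ'1]
  let e : MvPolynomial (Fin 2) k ≃ₐ[k] MvPolynomial (Fin 2) k := AlgEquiv.ofAlgHom τ τ' h1 h2
  have hp := (MulEquiv.prime_iff e.toMulEquiv).mpr (gkm_prime_X0 (k := k))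
  have : e.toMulEquiv (X 0) = C a * X 0 + C b * X 1 := hτ0
  rwa [this] at hp

lemma gkm_prime_lin {k : Type*} [Field k] (a b : k) (hab : a ≠ 0 ∨ b ≠ 0) :
    Prime (C a * X 0 + C b * X 1 : MvPolynomial (Fin 2) k) := by
  rcases hab with ha | hb
  · exact gkm_prime_lin_left a b ha
  · have h0 := gkm_prime_lin_left b a hb
    have h := (MulEquiv.prime_iff (MvPolynomial.renameEquiv k (Equiv.swap (0 : Fin 2) 1)).toMulEquiv).mpr h0
    have : (MvPolynomial.renameEquiv k (Equiv.swap (0 : Fin 2) 1)).toMulEquiv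
        (C b * X 0 + C a * X 1) = (C a * X 0 + C b * X 1 : MvPolynomial (Fin 2) k) := by
      show rename (Equiv.swap (0 : Fin 2) 1) (C b * X 0 + C a * X 1) = _
      rw [map_add, map_mul, map_mul, rename_C, rename_C, rename_X, rename_X]
      simp [add_comm]
    rwa [this] at h

lemma gkm_not_dvd_of_det {k : Type*} [Field k] (a b c d : k) (hdet : a * d - b * c ≠ 0) :
    ¬ (C c * X 0 + C d * X 1 : MvPolynomial (Fin 2) k) ∣ (C a * X 0 + C b * X 1) := by
  rintro ⟨g, hg⟩
  have := congrArg (eval ![d, -c]) hg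
  simp [eval_add, eval_mul] at this
  apply hdet
  rw [mul_comm d c] at this
  linear_combination this

lemma gkm_dvd_mul_of_dvd {k : Type*} [Field k] {α β p : MvPolynomial (Fin 2) k}
    (hβ : Prime β) (hnd : ¬ β ∣ α) (h1 : α ∣ p) (h2 : β ∣ p) :
    α * β ∣ p := by
  obtain ⟨e, rfl⟩ := h1
  rcases (hβ.dvd_mul.mp h2) with h | h
  · exact absurd h hnd
  · obtain ⟨f, rfl⟩ := h
    exact ⟨f, by ring⟩

end GKMAux

/-- The equivariant cohomology of the standard `T²`-GKM action on `S⁴` in its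
GKM description: for linearly independent homogeneous linear forms `α, β` in
`k[x,y]`, the module `M = {(f,g) : α ∣ f-g ∧ β ∣ f-g}` is free of rank 2
with basis `{(1,1), (αβ, 0)}`. -/
theorem stmt2 {k : Type*} [Field k] (α β : MvPolynomial (Fin 2) k)
    (hα : α.IsHomogeneous 1) (hβ : β.IsHomogeneous 1)
    (hind : LinearIndependent k ![α, β]) :
    LinearIndependent (MvPolynomial (Fin 2) k)
      ![((1 : MvPolynomial (Fin 2) k), (1 : MvPolynomial (Fin 2) k)),
        (α * β, (0 : MvPolynomial (Fin 2) k))] ∧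
    ((Submodule.span (MvPolynomial (Fin 2) k)
        {((1 : MvPolynomial (Fin 2) k), (1 : MvPolynomial (Fin 2) k)),
         (α * β, (0 : MvPolynomial (Fin 2) k))} :
        Submodule (MvPolynomial (Fin 2) k)
          (MvPolynomial (Fin 2) k × MvPolynomial (Fin 2) k)) :
      Set (MvPolynomial (Fin 2) k × MvPolynomial (Fin 2) k)) =
      {p : MvPolynomial (Fin 2) k × MvPolynomial (Fin 2) k |
        α ∣ p.1 - p.2 ∧ β ∣ p.1 - p.2} := by
  -- coordinates
  set a := coeff (Finsupp.single 0 1) α with ha_def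
  set b := coeff (Finsupp.single 1 1) α with hb_def
  set c := coeff (Finsupp.single 0 1) β with hc_def
  set d := coeff (Finsupp.single 1 1) β with hd_def
  have hA : α = C a * X 0 + C b * X 1 := gkm_homog1_eq α hα
  have hB : β = C c * X 0 + C d * X 1 := gkm_homog1_eq β hβ
  -- linear independence data
  have hind' := linearIndependent_fin2.mp hind
  have hβ0 : β ≠ 0 := by simpa using hind'.1
  have hsmul : ∀ t : k, t • β ≠ α := by
    intro t ht
    exact hind'.2 t (by simpa using ht)
  have hα0 : α ≠ 0 := fun h => hsmul 0 (by simp [h])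
  have hab : a ≠ 0 ∨ b ≠ 0 := by
    by_contra h
    push_neg at h
    exact hα0 (by rw [hA, h.1, h.2]; simp)
  have hcd : c ≠ 0 ∨ d ≠ 0 := by
    by_contra h
    push_neg at h
    exact hβ0 (by rw [hB, h.1, h.2]; simp)
  -- determinant is nonzero
  have hdet : a * d - b * c ≠ 0 := by
    intro h
    have hdet' : a * d = b * c := sub_eq_zero.mp h
    rcases hcd with hc | hd
    · apply hsmul (a / c)
      rw [smul_eq_C_mul, hA, hB, mul_add, ← mul_assoc, ← mul_assoc, ← C_mul, ← C_mul]
      rw [div_mul_cancel₀ a hc, show a / c * d = b by field_simp; linear_combination hdet']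
    · apply hsmul (b / d)
      rw [smul_eq_C_mul, hA, hB, mul_add, ← mul_assoc, ← mul_assoc, ← C_mul, ← C_mul]
      rw [div_mul_cancel₀ b hd, show b / d * c = a by field_simp; linear_combination -hdet']
  -- primality and non-divisibility
  have hpα : Prime α := hA ▸ gkm_prime_lin a b hab
  have hpβ : Prime β := hB ▸ gkm_prime_lin c d hcd
  have hnd : ¬ β ∣ α := by
    rw [hA, hB]
    exact gkm_not_dvd_of_det a b c d hdet
  have hαβ0 : α * β ≠ 0 := mul_ne_zero hpα.ne_zero hpβ.ne_zero
  constructor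
  · -- linear independence over the polynomial ring
    rw [Fintype.linearIndependent_iff]
    intro g hg
    rw [Fin.sum_univ_two] at hg
    simp only [Matrix.cons_val_zero, Matrix.cons_val_one, Matrix.head_cons,
      Prod.smul_mk, smul_eq_mul, mul_one, mul_zero, Prod.mk_add_mk, Prod.mk_eq_zero,
      add_zero] at hg
    obtain ⟨h1, h2⟩ := hg
    have hg1 : g 1 = 0 := by
      rw [h2, zero_add] at h1
      exact (mul_eq_zero.mp h1).resolve_right hαβ0
    intro i
    fin_cases i
    · exact h2
    · exact hg1
  · -- span equality
    ext p
    simp only [SetLike.mem_coe, Submodule.mem_span_pair, Set.mem_setOf_eq]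
    constructor
    · rintro ⟨m, n, rfl⟩
      simp only [Prod.smul_mk, smul_eq_mul, mul_one, mul_zero, Prod.mk_add_mk, add_zero,
        Prod.fst, Prod.snd]
      constructor
      · exact ⟨n * β, by ring⟩
      · exact ⟨n * α, by ring⟩
    · rintro ⟨h1, h2⟩
      obtain ⟨h, hh⟩ := gkm_dvd_mul_of_dvd hpβ hnd h1 h2
      refine ⟨p.2, h, ?_⟩
      have hfst : p.2 + h * (α * β) = p.1 := by
        have : p.1 - p.2 = α * β * h := hh
        linear_combination -this
      rw [Prod.ext_iff]
      constructor
      · simpa [smul_eq_mul, mul_comm] using hfst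
      · simp
end

section
/- Let R = ℤ[x₁,…,x_k], Γ a finite graph with vertex set V, oriented edge set Ẽ (each unoriented edge appearing with both orientations), and a signed labeling α : Ẽ → R by linear forms with α(ē) = −α(e). Suppose there is a connection: for each oriented edge e from v to w a bijection ∇_e from the edges at v to the edges at w with ∇_e(e) = ē and α(∇_e(f)) ≡ α(f) mod α(e) for all edges f at v. Assume each α(e) is a nonzero prime element of R. Then the tuple (∏_{f ∈ Ẽ_v} (1 + α(f)))_{v ∈ V} lies in the graph cohomology, i.e. for every oriented edge e from v to w, α(e) divides ∏_{f ∈ Ẽ_v}(1+α(f)) − ∏_{g ∈ Ẽ_w}(1+α(g)). -/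
open MvPolynomial

lemma aux_prod_sub {ι R : Type*} [DecidableEq ι] [CommRing R] {c : R} (s : Finset ι) (f g : ι → R)
    (h : ∀ i ∈ s, c ∣ f i - g i) : c ∣ (∏ i ∈ s, f i) - ∏ i ∈ s, g i := by
  induction s using Finset.induction with
  | empty => simp
  | @insert a s ha ih =>
    rw [Finset.prod_insert ha, Finset.prod_insert ha]
    have key : f a * ∏ i ∈ s, f i - g a * ∏ i ∈ s, g i
        = (f a - g a) * ∏ i ∈ s, f i + g a * ((∏ i ∈ s, f i) - ∏ i ∈ s, g i) := by ring
    rw [key]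
    exact dvd_add (Dvd.dvd.mul_right (h a (Finset.mem_insert_self a s)) _)
      (Dvd.dvd.mul_left (ih fun i hi => h i (Finset.mem_insert_of_mem hi)) _)

/-- The combinatorial total equivariant Chern class: on a signed GKM graph
(oriented edges with `α(ē) = -α(e)` and a compatible connection, all labels
nonzero primes which are linear forms in `ℤ[x₁,…,x_k]`), the tuple assigning
to each vertex `v` the product `∏_{f ∈ Ẽ_v} (1 + α(f))` over the oriented
edges emanating from `v` satisfies the GKM congruence relations. -/
theorem stmt7 {V E : Type} [Fintype E] [DecidableEq V] {k : ℕ}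
    (ini : E → V) (rev : E → E)
    (hrevinv : ∀ e, rev (rev e) = e) (hrevne : ∀ e, rev e ≠ e)
    (α : E → MvPolynomial (Fin k) ℤ)
    (hsign : ∀ e, α (rev e) = -α e)
    (hlin : ∀ e, (α e).IsHomogeneous 1)
    (hprime : ∀ e, Prime (α e))
    (nabla : E → E → E)
    (hfix : ∀ e, nabla e e = rev e)
    (hbij : ∀ e, Set.BijOn (nabla e) {f | ini f = ini e} {g | ini g = ini (rev e)})
    (hcong : ∀ e f, ini f = ini e → α e ∣ α (nabla e f) - α f) :
    ∀ e : E,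
      α e ∣ (∏ f ∈ Finset.univ.filter fun f => ini f = ini e, (1 + α f))
          - ∏ g ∈ Finset.univ.filter fun g => ini g = ini (rev e), (1 + α g) := by
  intro e
  have hb := hbij e
  have hprod : (∏ g ∈ Finset.univ.filter fun g => ini g = ini (rev e), (1 + α g))
      = ∏ f ∈ Finset.univ.filter fun f => ini f = ini e, (1 + α (nabla e f)) := by
    refine (Finset.prod_bij (fun f _ => nabla e f) ?_ ?_ ?_ ?_).symm
    · intro f hf
      simp only [Finset.mem_filter, Finset.mem_univ, true_and] at hf ⊢
      exact hb.mapsTo hf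
    · intro f hf g hg h
      simp only [Finset.mem_filter, Finset.mem_univ, true_and] at hf hg
      exact hb.injOn hf hg h
    · intro g hg
      simp only [Finset.mem_filter, Finset.mem_univ, true_and] at hg
      obtain ⟨f, hf, rfl⟩ := hb.surjOn hg
      exact ⟨f, by simpa using hf, rfl⟩
    · intro f hf; rfl
  rw [hprod]
  classical
  refine aux_prod_sub _ _ _ fun f hf => ?_
  simp only [Finset.mem_filter, Finset.mem_univ, true_and] at hf
  have := hcong e f hf
  have h2 : (1 : MvPolynomial (Fin k) ℤ) + α f - (1 + α (nabla e f)) = -(α (nabla e f) - α f) := by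
    ring
  rw [h2]
  exact this.neg_right
end

section
/- Let α, β ∈ ℤ² be linearly independent over ℚ. Then there is no integer c with 2β = cα. Consequently, the 2-valent labeled graph with two vertices joined by two edges with weights α and β admits no signed structure: there is no choice of signs ε_e for the edge labels and compatible connection satisfying the signed congruence relations, since the unique connection along the α-edge must send the β-edge to itself reversed, forcing −β ≡ β mod α in ℤ², i.e. α ∣ 2β. -/
/-- If `α, β ∈ ℤ²` are linearly independent over `ℚ` then there is no integer
`c` with `2β = cα`, and this remains so for any choice of signs of `α` and
`β`. Consequently the 2-valent labeled graph with two vertices joined by two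
edges labeled `α` and `β` (the GKM graph of a `T²`-action on `S⁴`) admits no
signed structure, since the unique connection along the `α`-edge sends the
`β`-edge to itself reversed, forcing `-β ≡ β mod α`, i.e. `α ∣ 2β`. -/
theorem stmt8 (α β : Fin 2 → ℤ)
    (hind : LinearIndependent ℚ
      ![(fun i => (α i : ℚ) : Fin 2 → ℚ), (fun i => (β i : ℚ) : Fin 2 → ℚ)]) :
    (¬ ∃ c : ℤ, (2 : ℤ) • β = c • α) ∧
    ∀ εa εb : ℤˣ, ¬ ∃ c : ℤ, (2 : ℤ) • ((εb : ℤ) • β) = c • ((εa : ℤ) • α) := by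
  have key : ∀ a b : ℤ, b ≠ 0 → ¬ ∃ c : ℤ, (2 : ℤ) • (b • β) = c • (a • α) := by
    intro a b hb ⟨c, hc⟩
    have h := LinearIndependent.pair_iff.1 hind ((c * a : ℤ) : ℚ) (-((2 * b : ℤ) : ℚ))
    have h2 : ((c * a : ℤ) : ℚ) • (fun i => (α i : ℚ)) +
        (-((2 * b : ℤ) : ℚ)) • (fun i => (β i : ℚ)) = 0 := by
      funext i
      have h3 := congrFun hc i
      simp only [Pi.smul_apply, smul_eq_mul] at h3
      have h4 : (2 * (b * β i) : ℚ) = (c * (a * α i) : ℚ) := by exact_mod_cast h3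
      simp only [Pi.add_apply, Pi.smul_apply, smul_eq_mul, Pi.zero_apply]
      push_cast
      linarith
    have h5 := (h h2).2
    have : (b : ℚ) = 0 := by push_cast at h5; linarith
    exact hb (by exact_mod_cast this)
  exact ⟨fun ⟨c, hc⟩ => key 1 1 one_ne_zero ⟨c, by simpa using hc⟩,
    fun εa εb => key (εa : ℤ) (εb : ℤ) εb.ne_zero⟩
end
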